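/- arXiv:2603.19007 — 6 statements merged into one kernel-verified Lean document; each statement's English description precedes it below -/
import Mathlib

section
/- Let n ≥ 1 and let p be a polynomial of degree d with complex coefficients. Consider the vector of amplitudes on n-bit strings whose value at (s_1,…,s_n) ∈ {0,1}^n is p(k(s)), where k(s) = −s_1·2^{n−1} + ∑_{j=2}^{n} s_j·2^{n−j} is the integer encoded by the string in two's-complement representation (so k(s) ranges over the grid [−2^{n−1}, 2^{n−1}−1] ∩ ℤ). Then this vector admits an exact matrix-product-state representation with bond dimension at most 2d+4: there exist natural numbers m_0 = 1, m_1, …, m_{n−1}, m_n = 1 with every m_i ≤ 2d+4, and complex matrices A_i^{(s)} of size m_{i−1} × m_i for each 1 ≤ i ≤ n and s ∈ {0,1}, such that for every bit string (s_1,…,s_n) the 1×1 matrix product A_1^{(s_1)} A_2^{(s_2)} ⋯ A_n^{(s_n)} equals p(k(s)). -/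
/-- Left-to-right contraction of a chain of matrices `A 0, A 1, …` with bond dimensions
`m 0, m 1, …`: the result after `k` steps is the row vector
`(1,…,1) ᵥ* A 0 ᵥ* ⋯ ᵥ* A (k-1)` (with `m 0 = 1` this is the usual MPS contraction). -/
noncomputable def mpsContract (m : ℕ → ℕ)
    (A : (i : ℕ) → Matrix (Fin (m i)) (Fin (m (i + 1))) ℂ) :
    (k : ℕ) → Fin (m k) → ℂ
  | 0 => fun _ => 1
  | (k + 1) => Matrix.vecMul (mpsContract m A k) (A k)

lemma binom_sum (d j : ℕ) (hj : j ≤ d) (t c : ℂ) :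
    ∑ a ∈ Finset.range (d+1), t ^ a * ((j.choose a : ℂ) * c ^ (j - a)) = (t + c) ^ j := by
  rw [← Finset.sum_subset (Finset.range_subset_range.mpr (by omega : j + 1 ≤ d + 1))
      (fun a _ ha => by
        rw [Nat.choose_eq_zero_of_lt (by simp at ha; omega)]; simp)]
  rw [add_pow]
  exact Finset.sum_congr rfl fun a _ => by ring

lemma fin_sum_range {a b : ℕ} (h : a = b) (g : ℕ → ℂ) :
    ∑ i : Fin a, g i.val = ∑ i ∈ Finset.range b, g i := by
  subst h; exact Fin.sum_univ_eq_sum_range g a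

/-- A degree-`d` polynomial evaluated on the two's-complement grid of `n`-bit strings admits
an exact matrix-product-state representation with bond dimension at most `2d + 4`. -/
theorem stmt2 (n d : ℕ) (hn : 1 ≤ n) (p : Polynomial ℂ) (hd : p.natDegree = d) :
    ∃ (m : ℕ → ℕ) (A : (i : ℕ) → Fin 2 → Matrix (Fin (m i)) (Fin (m (i + 1))) ℂ),
      m 0 = 1 ∧ m n = 1 ∧ (∀ i ≤ n, m i ≤ 2 * d + 4) ∧
      ∀ s : ℕ → Fin 2, ∀ j : Fin (m n),
        mpsContract m (fun i => A i (s i)) n j =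
          p.eval (((-(2 : ℤ) ^ (n - 1) * ((s 0 : ℕ) : ℤ) +
            ∑ i ∈ Finset.Ico 1 n, (2 : ℤ) ^ (n - 1 - i) * ((s i : ℕ) : ℤ) : ℤ) : ℂ)) := by
  classical
  by_cases h1 : n = 1
  · subst h1
    refine ⟨fun _ => 1,
      fun i s => Matrix.of fun _ _ => if i = 0 then p.eval (-((s : ℕ) : ℂ)) else 0,
      rfl, rfl, fun i _ => by norm_num, ?_⟩
    intro s j
    simp [mpsContract, Matrix.vecMul, dotProduct]
  · obtain ⟨k, rfl⟩ : ∃ k, n = k + 1 := ⟨n - 1, by omega⟩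
    have hk1 : 1 ≤ k := by omega
    set C : ℕ → Fin 2 → ℂ := fun i s =>
      if i = 0 then -(2:ℂ)^k * ((s : ℕ) : ℂ) else (2:ℂ)^(k-i) * ((s : ℕ) : ℂ) with hC
    set m : ℕ → ℕ := fun i => if i = 0 ∨ k + 1 ≤ i then 1 else d + 1 with hm
    set F : ℕ → Fin 2 → ℕ → ℕ → ℂ := fun i s a b =>
      if i = 0 then (C 0 s) ^ b
      else if i = k then
        ∑ j ∈ Finset.range (d+1), p.coeff j * (j.choose a : ℂ) * (C i s) ^ (j - a)
      else ((b.choose a : ℕ) : ℂ) * (C i s) ^ (b - a) with hF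
    have hm0 : m 0 = 1 := by simp [hm]
    have hmtop : m (k+1) = 1 := by simp [hm]
    have hmid : ∀ i, 1 ≤ i → i ≤ k → m i = d + 1 := by
      intro i hi1 hi2; simp only [hm]; rw [if_neg]; omega
    refine ⟨m, fun i s => Matrix.of fun a b => F i s a.val b.val, hm0, hmtop, ?_, ?_⟩
    · intro i hi
      simp only [hm]
      split <;> omega
    · intro s j
      set T : ℕ → ℂ := fun i => ∑ l ∈ Finset.range i, C l (s l) with hT
      set A : (i : ℕ) → Matrix (Fin (m i)) (Fin (m (i + 1))) ℂ :=
        fun i => Matrix.of fun a b => F i (s i) a.val b.val with hA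
      have hstep : ∀ i (j : Fin (m (i+1))),
          mpsContract m A (i+1) j
            = ∑ a : Fin (m i), mpsContract m A i a * F i (s i) a.val j.val := by
        intro i j
        simp [mpsContract, Matrix.vecMul, dotProduct, hA]
      have key : ∀ i, 1 ≤ i → i ≤ k → ∀ j : Fin (m i),
          mpsContract m A i j = (T i) ^ (j : ℕ) := by
        intro i
        induction i with
        | zero => omega
        | succ i ih =>
          intro _ hik j
          rw [hstep]
          rcases Nat.eq_zero_or_pos i with hi0 | hi1
          · subst hi0
            have : ∀ a : Fin (m 0), mpsContract m A 0 a = 1 := fun _ => rfl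
            simp only [this, one_mul]
            rw [fin_sum_range hm0 (fun v => F 0 (s 0) v j.val)]
            simp [hF, hT]
          · have hik' : i ≤ k := by omega
            have hne : i ≠ k := by omega
            have e : m i = d + 1 := hmid i hi1 hik'
            have e' : m (i+1) = d + 1 := hmid (i+1) (by omega) hik
            have hj : (j : ℕ) ≤ d := by have := j.isLt; omega
            simp only [ih hi1 hik']
            have hFi : ∀ a b : ℕ, F i (s i) a b = ((b.choose a : ℕ) : ℂ) * (C i (s i)) ^ (b - a) := by
              intro a b; simp only [hF]; rw [if_neg (by omega), if_neg hne]
            simp only [hFi]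
            rw [fin_sum_range e
              (fun a => T i ^ a * (((j : ℕ).choose a : ℂ) * C i (s i) ^ ((j:ℕ) - a)))]
            rw [binom_sum d (j : ℕ) hj]
            rw [show T i + C i (s i) = T (i+1) from (Finset.sum_range_succ _ _).symm]
      -- final contraction
      rw [hstep]
      have e : m k = d + 1 := hmid k hk1 le_rfl
      have hFk : ∀ a b : ℕ, F k (s k) a b
          = ∑ j ∈ Finset.range (d+1), p.coeff j * (j.choose a : ℂ) * (C k (s k)) ^ (j - a) := by
        intro a b; simp only [hF]; rw [if_neg (by omega)]; simp
      simp only [key k hk1 le_rfl, hFk]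
      rw [fin_sum_range e
        (fun a => T k ^ a * ∑ j ∈ Finset.range (d+1), p.coeff j * (j.choose a : ℂ) * C k (s k) ^ (j - a))]
      have swap : ∑ a ∈ Finset.range (d+1), T k ^ a *
            ∑ j ∈ Finset.range (d+1), p.coeff j * (j.choose a : ℂ) * C k (s k) ^ (j - a)
          = ∑ j ∈ Finset.range (d+1), p.coeff j *
            ∑ a ∈ Finset.range (d+1), T k ^ a * ((j.choose a : ℂ) * C k (s k) ^ (j - a)) := by
        simp_rw [Finset.mul_sum]
        rw [Finset.sum_comm]
        exact Finset.sum_congr rfl fun j _ => Finset.sum_congr rfl fun a _ => by ring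
      rw [swap]
      have heval : ∑ j ∈ Finset.range (d+1), p.coeff j * (T k + C k (s k)) ^ j
          = p.eval (T k + C k (s k)) := by
        rw [Polynomial.eval_eq_sum_range' (by omega : p.natDegree < d + 1)]
      rw [Finset.sum_congr rfl fun j hj => by
        rw [binom_sum d j (by simp at hj; omega) (T k) (C k (s k))]]
      rw [heval]
      -- identify T (k+1) with the integer value
      rw [show T k + C k (s k) = T (k+1) from (Finset.sum_range_succ _ _).symm]
      congr 1
      show ∑ l ∈ Finset.range (k+1), C l (s l) = _
      rw [Finset.range_eq_Ico, Finset.sum_eq_sum_Ico_succ_bot (by omega)]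
      push_cast
      rw [Finset.sum_congr rfl (fun l hl => show C l (s l) = 2 ^ (k - l) * ((s l : ℕ) : ℂ) from by
        simp only [Finset.mem_Ico] at hl; simp only [hC]; rw [if_neg (by omega : ¬ l = 0)])]
      simp [hC]
end

section
/- Let d ≥ 1, let Λ be a real symmetric positive-definite d×d matrix with largest eigenvalue λ_max(Λ), and let ψ : ℤ^d → ℝ be the normalized discrete Gaussian ψ(n) = exp(−(1/2) nᵀΛn) / ( ∑_{m∈ℤ^d} exp(−mᵀΛm) )^{1/2}. Then for every c ∈ ℤ^d with each coordinate c_i ∈ {−2, 0, 2}, the trace distance between ψ and its shift ψ(·+c) satisfies √( 1 − | ∑_{n∈ℤ^d} ψ(n) ψ(n+c) |² ) ≤ √2 · ( 1 − exp(−d·λ_max(Λ)) )^{1/2}. -/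
open Matrix in
lemma aux_rayleigh {d : ℕ} (Λ : Matrix (Fin d) (Fin d) ℝ) (hΛ : Λ.IsHermitian)
    (x : Fin d → ℝ) :
    ∃ y : Fin d → ℝ, dotProduct x (Λ.mulVec x) = (∑ i, hΛ.eigenvalues i * y i ^ 2) ∧
      (∑ i, y i ^ 2) = ∑ i, x i ^ 2 := by
  classical
  set U : Matrix (Fin d) (Fin d) ℝ := (hΛ.eigenvectorUnitary : Matrix (Fin d) (Fin d) ℝ) with hU
  have hstar : star U = Uᵀ := by
    ext i j; simp [Matrix.star_apply]
  have hUU : U * star U = 1 := (Matrix.mem_unitaryGroup_iff).mp hΛ.eigenvectorUnitary.2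
  refine ⟨(star U).mulVec x, ?_, ?_⟩
  · conv_lhs => rw [hΛ.spectral_theorem]; simp only [Unitary.conjStarAlgAut_apply, Unitary.coe_star, ← hU]
    rw [← Matrix.mulVec_mulVec, ← Matrix.mulVec_mulVec, Matrix.dotProduct_mulVec,
      ← Matrix.mulVec_transpose, ← hstar]
    simp [dotProduct, Matrix.mulVec_diagonal, Finset.mul_sum, mul_comm, mul_left_comm,
      pow_two, mul_assoc]
  · have h1 : ((star U).mulVec x) ⬝ᵥ ((star U).mulVec x) = x ⬝ᵥ x := by
      rw [hstar, Matrix.dotProduct_mulVec, ← Matrix.mulVec_transpose, Matrix.transpose_transpose,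
        Matrix.mulVec_mulVec, ← hstar, hUU, Matrix.one_mulVec]
    simpa [dotProduct, pow_two] using h1

lemma aux_summable_int {ε : ℝ} (hε : 0 < ε) :
    Summable fun m : ℤ => Real.exp (-(ε * (m : ℝ) ^ 2)) := by
  have key : Summable fun n : ℕ => Real.exp (-(ε * (n : ℝ) ^ 2)) := by
    refine Summable.of_nonneg_of_le (fun n => (Real.exp_pos _).le) (fun n => ?_)
      (summable_geometric_of_lt_one (Real.exp_pos (-ε)).le
        (Real.exp_lt_one_iff.mpr (by linarith)))
    rw [← Real.exp_nat_mul]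
    apply Real.exp_le_exp.mpr
    have h : (n : ℝ) ≤ (n : ℝ) ^ 2 := by
      have := Nat.le_self_pow (two_ne_zero) n
      exact_mod_cast this
    nlinarith
  refine Summable.of_nat_of_neg (by simpa using key) (by simpa using key)

lemma aux_summable_pi {f : ℤ → ℝ} (hf : Summable f) (h0 : ∀ n, 0 ≤ f n) (d : ℕ) :
    Summable fun n : Fin d → ℤ => ∏ i, f (n i) := by
  induction d with
  | zero => exact Summable.of_finite
  | succ d ih =>
    have h2 : Summable fun p : ℤ × (Fin d → ℤ) => f p.1 * ∏ i, f (p.2 i) :=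
      Summable.mul_of_nonneg (g := fun n : Fin d → ℤ => ∏ i, f (n i)) hf ih
        (fun n => h0 n) (fun n => Finset.prod_nonneg fun i _ => h0 _)
    have := (Fin.consEquiv fun _ : Fin (d + 1) => ℤ).symm.summable_iff.mpr h2
    convert this using 1
    funext n
    simp [Fin.prod_univ_succ, Fin.consEquiv, Fin.tail]

/-- Shearing-error bound for a normalized discrete Gaussian on `ℤ^d`: for any shift `c`
with coordinates in `{-2, 0, 2}`, the trace distance between the Gaussian and its shift is
at most `√2 · (1 - exp(-d·λ_max(Λ)))^{1/2}`. -/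
theorem stmt3 (d : ℕ) (hd : 1 ≤ d) (Λ : Matrix (Fin d) (Fin d) ℝ)
    (hsymm : Λ.IsSymm) (hpd : Λ.PosDef)
    (Q : (Fin d → ℝ) → ℝ)
    (hQ : ∀ x, Q x = dotProduct x (Λ.mulVec x))
    (ψ : (Fin d → ℤ) → ℝ)
    (hψ : ∀ n : Fin d → ℤ, ψ n = Real.exp (-Q (fun i => (n i : ℝ)) / 2) /
        Real.sqrt (∑' m : Fin d → ℤ, Real.exp (-Q (fun i => (m i : ℝ)))))
    (c : Fin d → ℤ) (hc : ∀ i, c i = -2 ∨ c i = 0 ∨ c i = 2) :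
    Real.sqrt (1 - |∑' n : Fin d → ℤ, ψ n * ψ (n + c)| ^ 2) ≤
      Real.sqrt 2 *
        Real.sqrt (1 - Real.exp (-((d : ℝ) * ⨆ i, hpd.isHermitian.eigenvalues i))) := by
  classical
  have hne : Nonempty (Fin d) := ⟨⟨0, hd⟩⟩
  set lam : Fin d → ℝ := hpd.isHermitian.eigenvalues with hlam
  set L : ℝ := ⨆ i, lam i with hLdef
  have hL : ∀ i, lam i ≤ L := fun i => le_ciSup (Set.Finite.bddAbove (Set.finite_range _)) i
  have hlpos : ∀ i, 0 < lam i := fun i => hpd.eigenvalues_pos i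
  have hLpos : 0 < L := lt_of_lt_of_le (hlpos (Classical.arbitrary _)) (hL _)
  set ε : ℝ := Finset.univ.inf' Finset.univ_nonempty lam with hεdef
  have hε : 0 < ε := by
    rw [hεdef, Finset.lt_inf'_iff]
    exact fun i _ => hlpos i
  have hεle : ∀ i, ε ≤ lam i := fun i => Finset.inf'_le _ (Finset.mem_univ i)
  -- Rayleigh bounds for Q
  have hQbound : ∀ x : Fin d → ℝ,
      ε * (∑ i, x i ^ 2) ≤ Q x ∧ Q x ≤ L * ∑ i, x i ^ 2 := by
    intro x
    obtain ⟨y, h1, h2⟩ := aux_rayleigh Λ hpd.isHermitian x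
    rw [hQ x, h1, ← h2]
    constructor
    · rw [Finset.mul_sum]
      exact Finset.sum_le_sum fun i _ =>
        mul_le_mul_of_nonneg_right (hεle i) (sq_nonneg _)
    · rw [Finset.mul_sum]
      exact Finset.sum_le_sum fun i _ =>
        mul_le_mul_of_nonneg_right (hL i) (sq_nonneg _)
  have hQ0 : ∀ x : Fin d → ℝ, 0 ≤ Q x := by
    intro x
    refine le_trans ?_ (hQbound x).1
    positivity
  -- summability
  set E : (Fin d → ℤ) → ℝ := fun m => Real.exp (-Q (fun i => (m i : ℝ))) with hE
  have hsum : Summable E := by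
    refine Summable.of_nonneg_of_le (fun n => (Real.exp_pos _).le) (fun n => ?_)
      (aux_summable_pi (aux_summable_int hε) (fun m => (Real.exp_pos _).le) d)
    rw [← Real.exp_sum]
    apply Real.exp_le_exp.mpr
    have := (hQbound (fun i => ((n i : ℤ) : ℝ))).1
    rw [Finset.sum_neg_distrib, ← Finset.mul_sum]
    linarith
  set T : ℝ := ∑' m, E m with hT
  have hT1 : (1 : ℝ) ≤ T := by
    have h00 : E 0 = 1 := by
      have : (fun i => (((0 : Fin d → ℤ) i : ℤ) : ℝ)) = (0 : Fin d → ℝ) := by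
        funext i; simp
      simp only [hE, this, hQ, Matrix.mulVec_zero, dotProduct_zero, neg_zero,
        Real.exp_zero]
    calc (1 : ℝ) = E 0 := h00.symm
      _ ≤ T := hsum.le_tsum 0 fun b _ => (Real.exp_pos _).le
  have hT0 : 0 < T := lt_of_lt_of_le one_pos hT1
  -- half shift
  set h : Fin d → ℤ := fun i => c i / 2 with hh
  have hc2 : ∀ i, c i = 2 * h i := by
    intro i
    rcases hc i with hi | hi | hi <;> simp [hh, hi]
  set v : Fin d → ℝ := fun i => (h i : ℝ) with hv
  have hv2 : (∑ i, v i ^ 2) ≤ (d : ℝ) := by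
    have h1 : ∀ i, v i ^ 2 ≤ 1 := by
      intro i
      rcases hc i with hi | hi | hi <;> norm_num [hv, hh, hi]
    calc (∑ i, v i ^ 2) ≤ ∑ _i : Fin d, (1 : ℝ) :=
          Finset.sum_le_sum fun i _ => h1 i
      _ = d := by simp
  -- symmetry of bilinear form
  have hBsymm : ∀ a b : Fin d → ℝ,
      dotProduct a (Λ.mulVec b) = dotProduct b (Λ.mulVec a) := by
    intro a b
    rw [Matrix.dotProduct_mulVec, ← Matrix.mulVec_transpose, hsymm.eq, dotProduct_comm]
  -- parallelogram identity
  have hkey : ∀ b : Fin d → ℝ, Q (b - v) + Q (b + v) = 2 * Q b + 2 * Q v := by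
    intro b
    simp only [hQ, Matrix.mulVec_add, Matrix.mulVec_sub, add_dotProduct,
      sub_dotProduct, dotProduct_add, dotProduct_sub]
    rw [hBsymm v b]
    ring
  -- pointwise identity for the terms
  have hterm : ∀ n : Fin d → ℤ, ψ n * ψ (n + c) = Real.exp (-Q v) * E (n + h) / T := by
    intro n
    set a : Fin d → ℝ := fun i => (n i : ℝ) with ha
    have cast1 : (fun i => (((n + c) i : ℤ) : ℝ)) = (a + v) + v := by
      funext i
      simp only [Pi.add_apply, ha, hv, hc2 i]
      push_cast
      ring
    have cast2 : (fun i => (((n + h) i : ℤ) : ℝ)) = a + v := by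
      funext i
      simp only [Pi.add_apply, ha, hv]
      push_cast
      ring
    have hsub : (a + v) - v = a := by abel
    have hq : -Q a / 2 + -Q ((a + v) + v) / 2 = -Q v + -Q (a + v) := by
      have := hkey (a + v)
      rw [hsub] at this
      linarith
    rw [hψ n, hψ (n + c), cast1, div_mul_div_comm, ← Real.exp_add,
      Real.mul_self_sqrt hT0.le, hq, Real.exp_add]
    rw [hE]
    simp only [cast2]
  -- the tsum evaluates to exp(-Q v)
  have hshift : ∑' n : Fin d → ℤ, E (n + h) = T := by
    have := (Equiv.addRight h).tsum_eq E
    simpa [Equiv.coe_addRight] using this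
  have hS : ∑' n : Fin d → ℤ, ψ n * ψ (n + c) = Real.exp (-Q v) := by
    rw [tsum_congr hterm]
    have : (fun n : Fin d → ℤ => Real.exp (-Q v) * E (n + h) / T)
        = fun n : Fin d → ℤ => (Real.exp (-Q v) / T) * E (n + h) := by
      funext n; ring
    rw [this, tsum_mul_left, hshift]
    field_simp
  -- final bounds
  have hQvL : Q v ≤ (d : ℝ) * L := by
    calc Q v ≤ L * ∑ i, v i ^ 2 := (hQbound v).2
      _ ≤ L * d := by nlinarith
      _ = (d : ℝ) * L := by ring
  have he1le : Real.exp (-Q v) ≤ 1 := Real.exp_le_one_iff.mpr (by linarith [hQ0 v])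
  have he2le : Real.exp (-((d : ℝ) * L)) ≤ Real.exp (-Q v) :=
    Real.exp_le_exp.mpr (by linarith)
  rw [hS, Real.abs_exp, ← Real.sqrt_mul (by norm_num : (0 : ℝ) ≤ 2)]
  apply Real.sqrt_le_sqrt
  nlinarith [sq_nonneg (1 - Real.exp (-Q v)), Real.exp_pos (-((d : ℝ) * L))]
end

section
/- Let d ≥ 1, let Λ be a real symmetric positive-definite d×d matrix, and let ψ : ℤ^d → ℝ be the normalized discrete Gaussian ψ(n) = exp(−(1/2) nᵀΛn) / ( ∑_{m∈ℤ^d} exp(−mᵀΛm) )^{1/2}. Then for every index k ∈ {1,…,d} and for c = ±2e_k (twice a standard basis vector), the trace distance between ψ and its shift ψ(·+c) satisfies √( 1 − | ∑_{n∈ℤ^d} ψ(n) ψ(n+c) |² ) ≤ √2 · ( 1 − exp(−Λ_{kk}) )^{1/2}, where Λ_{kk} is the k-th diagonal entry of Λ. -/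
open Real Matrix

section StmtAux

variable {d : ℕ} {Λ : Matrix (Fin d) (Fin d) ℝ}

lemma stmt4_aux_symm (h : Λ.IsSymm) (x y : Fin d → ℝ) :
    x ⬝ᵥ Λ *ᵥ y = y ⬝ᵥ Λ *ᵥ x := by
  simp only [dotProduct, Matrix.mulVec, Finset.mul_sum]
  rw [Finset.sum_comm]
  refine Finset.sum_congr rfl fun i _ => Finset.sum_congr rfl fun j _ => ?_
  rw [← h.apply i j]
  ring

lemma stmt4_aux_expand (h : Λ.IsSymm) (x v : Fin d → ℝ) :
    (x + v) ⬝ᵥ Λ *ᵥ (x + v) =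
      x ⬝ᵥ Λ *ᵥ x + 2 * (x ⬝ᵥ Λ *ᵥ v) + v ⬝ᵥ Λ *ᵥ v := by
  simp only [Matrix.mulVec_add, dotProduct_add, add_dotProduct]
  have := stmt4_aux_symm h v x
  linarith

lemma stmt4_aux_key (h : Λ.IsSymm) (x v : Fin d → ℝ) :
    x ⬝ᵥ Λ *ᵥ x + (x + (v + v)) ⬝ᵥ Λ *ᵥ (x + (v + v)) =
      2 * ((x + v) ⬝ᵥ Λ *ᵥ (x + v)) + 2 * (v ⬝ᵥ Λ *ᵥ v) := by
  have h1 := stmt4_aux_expand h x (v + v)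
  have h2 := stmt4_aux_expand h x v
  have h3 := stmt4_aux_expand h v v
  simp only [Matrix.mulVec_add, dotProduct_add, add_dotProduct] at *
  linarith

lemma stmt4_aux_smul (s : ℝ) (x : Fin d → ℝ) :
    (s • x) ⬝ᵥ Λ *ᵥ (s • x) = s ^ 2 * (x ⬝ᵥ Λ *ᵥ x) := by
  rw [Matrix.mulVec_smul, smul_dotProduct, dotProduct_smul]
  simp only [smul_eq_mul]
  ring

lemma stmt4_gauss1 {μ : ℝ} (hμ : 0 < μ) :
    Summable fun m : ℤ => Real.exp (-(μ * (m : ℝ) ^ 2)) := by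
  have hr : Real.exp (-μ) < 1 := Real.exp_lt_one_iff.mpr (by linarith)
  have hr0 : 0 ≤ Real.exp (-μ) := (Real.exp_pos _).le
  have hnat : Summable fun n : ℕ => Real.exp (-(μ * ((n : ℤ) : ℝ) ^ 2)) := by
    refine Summable.of_nonneg_of_le (fun n => (Real.exp_pos _).le) (fun n => ?_)
      (summable_geometric_of_lt_one hr0 hr)
    rw [← Real.exp_nat_mul]
    apply Real.exp_le_exp.mpr
    have h1 : (n : ℝ) ≤ (n : ℝ) ^ 2 := by
      rcases Nat.eq_zero_or_pos n with h | h
      · simp [h]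
      · have h2 : (1 : ℝ) ≤ (n : ℝ) := by exact_mod_cast h
        nlinarith
    push_cast
    nlinarith
  apply Summable.of_nat_of_neg <;> simpa using hnat

lemma stmt4_gaussd (d : ℕ) {μ : ℝ} (hμ : 0 < μ) :
    Summable fun n : Fin d → ℤ => Real.exp (-(μ * ∑ i, ((n i : ℝ)) ^ 2)) := by
  induction d with
  | zero =>
      simp only [Finset.univ_eq_empty, Finset.sum_empty]
      exact .of_finite
  | succ d ih =>
      rw [← (Fin.consEquiv (fun _ : Fin (d + 1) => ℤ)).summable_iff]
      have heq : ((fun n : Fin (d + 1) → ℤ => Real.exp (-(μ * ∑ i, ((n i : ℝ)) ^ 2))) ∘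
          (Fin.consEquiv (fun _ : Fin (d + 1) => ℤ))) = fun p : ℤ × (Fin d → ℤ) =>
            Real.exp (-(μ * (p.1 : ℝ) ^ 2)) * Real.exp (-(μ * ∑ i, ((p.2 i : ℝ)) ^ 2)) := by
        funext p
        rw [Function.comp_apply, ← Real.exp_add]
        congr 1
        simp only [Fin.consEquiv_apply, Fin.sum_univ_succ, Fin.cons_zero, Fin.cons_succ]
        ring
      rw [heq]
      exact (stmt4_gauss1 hμ).mul_of_nonneg ih (fun n => (Real.exp_pos _).le)
        (fun n => (Real.exp_pos _).le)

lemma stmt4_coercive (k : Fin d) (hpd : Λ.PosDef) :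
    ∃ μ : ℝ, 0 < μ ∧ ∀ x : Fin d → ℝ, μ * ∑ i, x i ^ 2 ≤ x ⬝ᵥ Λ *ᵥ x := by
  have hpos : ∀ x : Fin d → ℝ, x ≠ 0 → 0 < x ⬝ᵥ Λ *ᵥ x := by
    intro x hx
    have := hpd.dotProduct_mulVec_pos hx
    simpa using this
  have hg : Continuous fun x : Fin d → ℝ => ∑ i, x i ^ 2 := by fun_prop
  have hf : Continuous fun x : Fin d → ℝ => x ⬝ᵥ Λ *ᵥ x := by
    simp only [dotProduct, Matrix.mulVec]
    fun_prop
  set K : Set (Fin d → ℝ) := {x | ∑ i, x i ^ 2 = 1} with hK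
  have hKc : IsCompact K := by
    apply Metric.isCompact_of_isClosed_isBounded
    · exact isClosed_eq hg continuous_const
    · rw [isBounded_iff_forall_norm_le]
      refine ⟨1, fun x hx => ?_⟩
      rw [pi_norm_le_iff_of_nonneg (by norm_num)]
      intro i
      rw [Real.norm_eq_abs, ← sq_le_one_iff_abs_le_one]
      calc x i ^ 2 ≤ ∑ j, x j ^ 2 :=
            Finset.single_le_sum (fun j _ => sq_nonneg (x j)) (Finset.mem_univ i)
        _ = 1 := hx
  have hKne : K.Nonempty := by
    refine ⟨fun i => if i = k then 1 else 0, ?_⟩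
    have h1 : ∀ i : Fin d, ((if i = k then (1 : ℝ) else 0)) ^ 2 = if i = k then 1 else 0 := by
      intro i; split <;> norm_num
    simp only [hK, Set.mem_setOf_eq, h1, Finset.sum_ite_eq', Finset.mem_univ, if_true]
  obtain ⟨x₀, hx₀K, hmin⟩ := hKc.exists_isMinOn hKne hf.continuousOn
  have hx₀ne : x₀ ≠ 0 := by
    intro h
    rw [h] at hx₀K
    simp [hK] at hx₀K
  refine ⟨x₀ ⬝ᵥ Λ *ᵥ x₀, hpos x₀ hx₀ne, fun x => ?_⟩
  rcases eq_or_ne x 0 with rfl | hx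
  · simp
  · have hsumpos : 0 < ∑ i, x i ^ 2 := by
      obtain ⟨i, hi⟩ := Function.ne_iff.mp hx
      refine Finset.sum_pos' (fun j _ => sq_nonneg _) ⟨i, Finset.mem_univ i, sq_pos_of_ne_zero hi⟩
    set t : ℝ := Real.sqrt (∑ i, x i ^ 2) with ht
    have ht2 : t ^ 2 = ∑ i, x i ^ 2 := Real.sq_sqrt hsumpos.le
    have htpos : 0 < t := Real.sqrt_pos.mpr hsumpos
    have hyK : (t⁻¹ • x) ∈ K := by
      simp only [hK, Set.mem_setOf_eq, Pi.smul_apply, smul_eq_mul, mul_pow, ← Finset.mul_sum]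
      rw [← ht2, inv_pow]
      field_simp
    have h := isMinOn_iff.mp hmin _ hyK
    rw [stmt4_aux_smul] at h
    have h2 : (t⁻¹) ^ 2 * (∑ i, x i ^ 2) = 1 := by
      rw [inv_pow, ht2]
      field_simp
    calc (x₀ ⬝ᵥ Λ *ᵥ x₀) * ∑ i, x i ^ 2
        ≤ ((t⁻¹) ^ 2 * (x ⬝ᵥ Λ *ᵥ x)) * ∑ i, x i ^ 2 :=
          mul_le_mul_of_nonneg_right h hsumpos.le
      _ = ((t⁻¹) ^ 2 * ∑ i, x i ^ 2) * (x ⬝ᵥ Λ *ᵥ x) := by ring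
      _ = x ⬝ᵥ Λ *ᵥ x := by rw [h2, one_mul]

end StmtAux


/-- Two-dimensional-shearing-error bound for a normalized discrete Gaussian on `ℤ^d`:
for a shift by `±2` along a single coordinate `k`, the trace distance between the Gaussian
and its shift is at most `√2 · (1 - exp(-Λ_{kk}))^{1/2}`. -/
theorem stmt4 (d : ℕ) (hd : 1 ≤ d) (Λ : Matrix (Fin d) (Fin d) ℝ)
    (hsymm : Λ.IsSymm) (hpd : Λ.PosDef)
    (Q : (Fin d → ℝ) → ℝ)
    (hQ : ∀ x, Q x = dotProduct x (Λ.mulVec x))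
    (ψ : (Fin d → ℤ) → ℝ)
    (hψ : ∀ n : Fin d → ℤ, ψ n = Real.exp (-Q (fun i => (n i : ℝ)) / 2) /
        Real.sqrt (∑' m : Fin d → ℤ, Real.exp (-Q (fun i => (m i : ℝ)))))
    (k : Fin d) (ε : ℤ) (hε : ε = 2 ∨ ε = -2)
    (c : Fin d → ℤ) (hc : c = fun i => if i = k then ε else 0) :
    Real.sqrt (1 - |∑' n : Fin d → ℤ, ψ n * ψ (n + c)| ^ 2) ≤
      Real.sqrt 2 * Real.sqrt (1 - Real.exp (-(Λ k k))) := by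
  obtain ⟨μ, hμ, hco⟩ := stmt4_coercive k hpd
  set S : ℝ := ∑' m : Fin d → ℤ, Real.exp (-Q (fun i => (m i : ℝ))) with hS
  have hsum : Summable fun m : Fin d → ℤ => Real.exp (-Q (fun i => (m i : ℝ))) := by
    refine (stmt4_gaussd d hμ).of_nonneg_of_le (fun n => (Real.exp_pos _).le) (fun n => ?_)
    rw [hQ]
    exact Real.exp_le_exp.mpr (neg_le_neg (hco _))
  have hSpos : 0 < S := Summable.tsum_pos hsum (fun m => (Real.exp_pos _).le) 0 (Real.exp_pos _)
  obtain ⟨σ, hσsq, hεσ⟩ : ∃ σ : ℤ, ((σ : ℝ)) ^ 2 = 1 ∧ ε = 2 * σ := by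
    rcases hε with h | h
    · exact ⟨1, by norm_num, by omega⟩
    · exact ⟨-1, by norm_num, by omega⟩
  set b : Fin d → ℤ := fun i => if i = k then σ else 0 with hb
  have hcb : c = b + b := by
    funext i
    simp only [hc, hb, Pi.add_apply]
    split <;> omega
  set w : Fin d → ℝ := fun i => if i = k then (σ : ℝ) else 0 with hw
  have hQw : w ⬝ᵥ Λ *ᵥ w = Λ k k := by
    have h1 : Λ *ᵥ w = fun j => (σ : ℝ) * Λ j k := by
      funext j
      simp [hw, Matrix.mulVec, dotProduct, mul_ite, mul_zero, mul_comm]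
    rw [h1]
    simp only [hw, dotProduct, ite_mul, zero_mul, Finset.sum_ite_eq',
      Finset.mem_univ, if_true]
    linear_combination Λ k k * hσsq
  have hcast : ∀ n : Fin d → ℤ, (fun i => (((n + b) i : ℤ) : ℝ)) = (fun i => (n i : ℝ)) + w := by
    intro n
    funext i
    simp only [hb, hw, Pi.add_apply]
    split <;> push_cast <;> ring
  have hterm : ∀ n : Fin d → ℤ,
      ψ n * ψ (n + c) =
        Real.exp (-(Λ k k)) / S * Real.exp (-Q (fun i => (((n + b) i : ℤ) : ℝ))) := by
    intro n
    rw [hψ, hψ]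
    set x : Fin d → ℝ := fun i => (n i : ℝ) with hx
    have hx2 : (fun i => (((n + c) i : ℤ) : ℝ)) = x + (w + w) := by
      funext i
      simp only [hcb, hb, hw, hx, Pi.add_apply]
      split <;> push_cast <;> ring
    rw [hx2, hcast n, div_mul_div_comm, ← Real.exp_add, Real.mul_self_sqrt hSpos.le]
    have hkey : -Q x / 2 + -Q (x + (w + w)) / 2 = -(Λ k k) + -Q (x + w) := by
      have h := stmt4_aux_key hsymm x w
      rw [← hQw]
      rw [hQ x, hQ (x + (w + w)), hQ (x + w)]
      linarith
    rw [hkey, Real.exp_add]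
    ring
  rw [tsum_congr hterm, tsum_mul_left]
  have hshift : (∑' n : Fin d → ℤ, Real.exp (-Q (fun i => (((n + b) i : ℤ) : ℝ)))) = S := by
    rw [hS]
    exact (Equiv.addRight b).tsum_eq fun m : Fin d → ℤ =>
      Real.exp (-Q (fun i => (m i : ℝ)))
  rw [hshift, div_mul_cancel₀ _ hSpos.ne']
  rw [abs_of_pos (Real.exp_pos _)]
  have hΛkk : 0 < Λ k k := by
    have h := hpd.dotProduct_mulVec_pos (x := fun i => if i = k then (1 : ℝ) else 0) (by
      intro h
      have := congrFun h k
      simp at this)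
    simpa [dotProduct, Matrix.mulVec, mul_ite, mul_zero, ite_mul, zero_mul,
      Finset.sum_ite_eq', Finset.sum_ite_eq] using h
  have he1 : Real.exp (-(Λ k k)) ≤ 1 := Real.exp_le_one_iff.mpr (by linarith)
  rw [← Real.sqrt_mul (by norm_num : (0 : ℝ) ≤ 2)]
  apply Real.sqrt_le_sqrt
  nlinarith [sq_nonneg (1 - Real.exp (-(Λ k k))), Real.exp_pos (-(Λ k k))]
end

section
/- For every integer n ≥ 1, the sum λ_ν = ∑ 1/‖ν‖₂² over all nonzero ν ∈ ℤ³ with ‖ν‖_∞ ≤ 2^n − 1 satisfies λ_ν ≥ (1/3)·( 7·2^{n+1} − 9n − 11 − 3·2^{−n} ). Consequently r_ν := (4/λ_ν)·( 7·2^{n+1} − 9n − 11 − 3·2^{−n} ) ≤ 12. -/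
open Finset

lemma card_box' (M : ℤ) (hM : 0 ≤ M) :
    (((Finset.Icc (fun _ => -M) (fun _ => M) : Finset (Fin 3 → ℤ))).card : ℝ)
      = (2*(M:ℝ)+1)^3 := by
  rw [Pi.card_Icc]
  simp [Int.card_Icc]
  have h0 : ((M + 1 + M).toNat : ℤ) = M + 1 + M := Int.toNat_of_nonneg (by linarith)
  have h : ((M + 1 + M).toNat : ℝ) = 2*(M:ℝ)+1 := by
    rw [← Int.cast_natCast (R := ℝ), h0]; push_cast; ring
  rw [h]

lemma point_bound' (M : ℤ) (hM : 1 ≤ M) (ν : Fin 3 → ℤ)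
    (h1 : ν ∈ (Finset.Icc (fun _ => -M) (fun _ => M) : Finset (Fin 3 → ℤ))) (h2 : ν ≠ 0) :
    1 / (3 * (M:ℝ)^2) ≤ (∑ i, ((ν i : ℝ)) ^ 2)⁻¹ := by
  rw [Finset.mem_Icc] at h1
  have hub : ∑ i, ((ν i:ℝ))^2 ≤ 3*(M:ℝ)^2 := by
    have hb : ∀ i, ((ν i:ℝ))^2 ≤ (M:ℝ)^2 := by
      intro i
      have l1 : -M ≤ ν i := h1.1 i
      have l2 : ν i ≤ M := h1.2 i
      have l1' : -(M:ℝ) ≤ (ν i : ℝ) := by exact_mod_cast l1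
      have l2' : (ν i : ℝ) ≤ (M:ℝ) := by exact_mod_cast l2
      nlinarith
    calc ∑ i, ((ν i:ℝ))^2 ≤ ∑ _i : Fin 3, (M:ℝ)^2 := Finset.sum_le_sum (fun i _ => hb i)
      _ = 3*(M:ℝ)^2 := by simp
  have hpos : 0 < ∑ i, ((ν i:ℝ))^2 := by
    obtain ⟨i, hi⟩ := Function.ne_iff.mp h2
    have hi0 : ν i ≠ 0 := by simpa using hi
    have hi1 : (1:ℤ) ≤ |ν i| := Int.one_le_abs hi0
    have hi1' : (1:ℝ) ≤ ((ν i:ℝ))^2 := by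
      have : (1:ℤ) ≤ (ν i)^2 := by nlinarith [sq_abs (ν i)]
      exact_mod_cast this
    have hs := Finset.single_le_sum (f := fun i => ((ν i:ℝ))^2)
      (fun j _ => sq_nonneg _) (Finset.mem_univ i)
    linarith
  rw [one_div]
  exact inv_anti₀ hpos hub

lemma sum_subset_ge' (M : ℤ) (t : Finset (Fin 3 → ℤ))
    (pb : ∀ ν ∈ t, 1 / (3 * (M:ℝ)^2) ≤ (∑ i, ((ν i : ℝ)) ^ 2)⁻¹) :
    (t.card : ℝ) / (3*(M:ℝ)^2) ≤ ∑ ν ∈ t, (∑ i, ((ν i : ℝ)) ^ 2)⁻¹ := by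
  have h := Finset.card_nsmul_le_sum t _ (1/(3*(M:ℝ)^2)) pb
  rw [nsmul_eq_mul] at h
  calc (t.card : ℝ) / (3*(M:ℝ)^2) = (t.card : ℝ) * (1/(3*(M:ℝ)^2)) := by ring
    _ ≤ _ := h

lemma key_ineq' (x : ℝ) (hx : 2 ≤ x) :
    (1/3)*(14*x - 9 + 3/(2*x)) ≤ ((4*x-1)^3 - (2*x-1)^3)/(3*(2*x-1)^2) := by
  have h1 : 0 < x := by linarith
  have h2 : 0 < 2*x - 1 := by linarith
  rw [← sub_nonneg]
  have heq : ((4*x-1)^3 - (2*x-1)^3)/(3*(2*x-1)^2) - (1/3)*(14*x - 9 + 3/(2*x))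
      = (112*x^3 - 100*x^2 + 30*x - 3)/(6*x*(2*x-1)^2) := by
    rw [div_sub' (by positivity), div_eq_div_iff (by positivity) (by positivity)]
    field_simp
    ring
  rw [heq]
  apply div_nonneg _ (by positivity)
  nlinarith [sq_nonneg (x-2)]

lemma zero_mem_box (M : ℤ) (hM : 0 ≤ M) :
    (0 : Fin 3 → ℤ) ∈ (Finset.Icc (fun _ => -M) (fun _ => M) : Finset (Fin 3 → ℤ)) := by
  rw [Finset.mem_Icc]
  constructor <;> intro i <;> simp <;> linarith

lemma card_erase_box (M : ℤ) (hM : 0 ≤ M) :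
    ((((Finset.Icc (fun _ => -M) (fun _ => M) : Finset (Fin 3 → ℤ))).erase 0).card : ℝ)
      = (2*(M:ℝ)+1)^3 - 1 := by
  rw [Finset.card_erase_of_mem (zero_mem_box M hM),
    Nat.cast_sub (Finset.card_pos.mpr ⟨0, zero_mem_box M hM⟩), card_box' M hM, Nat.cast_one]

lemma main_bound (n : ℕ) (hn : 1 ≤ n) :
    (1/3) * (7 * (2:ℝ)^(n+1) - 9*(n:ℝ) - 11 - 3/(2:ℝ)^n)
      ≤ ∑ ν ∈ ((Finset.Icc (fun _ => -((2:ℤ)^n - 1)) (fun _ => (2:ℤ)^n - 1) :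
            Finset (Fin 3 → ℤ)).erase 0), (∑ i, ((ν i : ℝ)) ^ 2)⁻¹ := by
  induction n with
  | zero => omega
  | succ k ih =>
    rcases Nat.eq_zero_or_pos k with rfl | hk
    · -- base case n = 1, M = 1
      have h1 : ((2:ℤ)^(0+1) - 1) = 1 := by norm_num
      rw [h1]
      set t := ((Finset.Icc (fun _ => -(1:ℤ)) (fun _ => (1:ℤ)) :
          Finset (Fin 3 → ℤ)).erase 0) with ht
      have pb : ∀ ν ∈ t, 1 / (3 * ((1:ℤ):ℝ)^2) ≤ (∑ i, ((ν i : ℝ)) ^ 2)⁻¹ := by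
        intro ν hν
        exact point_bound' 1 le_rfl ν (Finset.mem_of_mem_erase hν) (Finset.ne_of_mem_erase hν)
      have hsum := sum_subset_ge' 1 t pb
      have hcard : (t.card : ℝ) = 26 := by
        rw [ht, card_erase_box 1 (by norm_num)]; norm_num
      rw [hcard] at hsum
      norm_num at hsum ⊢
      linarith
    · -- inductive step, k ≥ 1
      have ihb := ih hk
      set M : ℤ := (2:ℤ)^k - 1 with hM
      set M' : ℤ := (2:ℤ)^(k+1) - 1 with hM'
      have hMpos : 1 ≤ M := by
        have : (2:ℤ)^1 ≤ (2:ℤ)^k := pow_le_pow_right₀ (by norm_num) hk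
        simp at this; omega
      have hM'pos : 1 ≤ M' := by
        have : (2:ℤ)^1 ≤ (2:ℤ)^(k+1) := pow_le_pow_right₀ (by norm_num) (by omega)
        simp at this; omega
      have hMM' : M ≤ M' := by
        have : (2:ℤ)^k ≤ (2:ℤ)^(k+1) := pow_le_pow_right₀ (by norm_num) (Nat.le_succ k)
        omega
      set s := ((Finset.Icc (fun _ => -M) (fun _ => M) : Finset (Fin 3 → ℤ)).erase 0) with hs
      set t := ((Finset.Icc (fun _ => -M') (fun _ => M') : Finset (Fin 3 → ℤ)).erase 0) with htdef
      have hsub : s ⊆ t := by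
        apply Finset.erase_subset_erase
        apply Finset.Icc_subset_Icc
        · intro i; simp only; omega
        · intro i; simp only; omega
      have hsplit := Finset.sum_sdiff (f := fun ν => (∑ i, ((ν i : ℝ)) ^ 2)⁻¹) hsub
      have pb : ∀ ν ∈ t \ s, 1 / (3 * (M':ℝ)^2) ≤ (∑ i, ((ν i : ℝ)) ^ 2)⁻¹ := by
        intro ν hν
        have hνt : ν ∈ t := (Finset.mem_sdiff.mp hν).1
        exact point_bound' M' hM'pos ν (Finset.mem_of_mem_erase hνt) (Finset.ne_of_mem_erase hνt)
      have hdiff := sum_subset_ge' M' (t \ s) pb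
      set x : ℝ := (2:ℝ)^k with hx
      have hx2 : (2:ℝ) ≤ x := by
        have : (2:ℝ)^1 ≤ (2:ℝ)^k := pow_le_pow_right₀ (by norm_num) hk
        simpa using this
      have hxpos : (0:ℝ) < x := by linarith
      have hMr : ((M:ℤ):ℝ) = x - 1 := by rw [hM]; push_cast; ring
      have hM'r : ((M':ℤ):ℝ) = 2*x - 1 := by rw [hM']; push_cast [pow_succ]; ring
      have hcd : (((t \ s).card : ℝ)) = (4*x-1)^3 - (2*x-1)^3 := by
        rw [Finset.cast_card_sdiff hsub, htdef, hs,
          card_erase_box M' (by omega), card_erase_box M (by omega), hMr, hM'r]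
        ring
      rw [hcd, hM'r] at hdiff
      have hdiff' : ((4*x-1)^3 - (2*x-1)^3)/(3*(2*x-1)^2)
          ≤ ∑ ν ∈ t \ s, (∑ i, ((ν i : ℝ)) ^ 2)⁻¹ := by
        exact hdiff
      have hkey := key_ineq' x hx2
      have e1 : (2:ℝ)^(k+1) = 2*x := by rw [pow_succ]; ring
      have e2 : (2:ℝ)^(k+1+1) = 4*x := by rw [pow_succ, e1]; ring
      rw [e1] at ihb
      have hfin : (1/3)*(7*(2*x) - 9*(k:ℝ) - 11 - 3/x) + (1/3)*(14*x - 9 + 3/(2*x))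
          = (1/3) * (7 * (4*x) - 9*((k:ℝ)+1) - 11 - 3/(2*x)) := by
        field_simp
        ring
      rw [e2, e1]
      push_cast
      rw [hx] at ihb ⊢
      linarith [ihb, hkey, hdiff', hsplit, hfin]

/-- Lower bound on the momentum-state normalization constant
`λ_ν = ∑_{0 ≠ ν ∈ ℤ³, ‖ν‖_∞ ≤ 2ⁿ - 1} 1/‖ν‖₂²`, and the resulting bound `r_ν ≤ 12`. -/
theorem stmt6 (n : ℕ) (hn : 1 ≤ n)
    (S : Finset (Fin 3 → ℤ))
    (hS : S = (Finset.Icc (fun _ => -(2 ^ n - 1) : Fin 3 → ℤ)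
        (fun _ => 2 ^ n - 1 : Fin 3 → ℤ)).erase 0)
    (lam : ℝ)
    (hlam : lam = ∑ ν ∈ S, (∑ i, ((ν i : ℝ)) ^ 2)⁻¹) :
    (1 / 3) * (7 * (2 : ℝ) ^ (n + 1) - 9 * (n : ℝ) - 11 - 3 / (2 : ℝ) ^ n) ≤ lam ∧
    (4 / lam) * (7 * (2 : ℝ) ^ (n + 1) - 9 * (n : ℝ) - 11 - 3 / (2 : ℝ) ^ n) ≤ 12 := by
  subst hS hlam
  have h1 := main_bound n hn
  refine ⟨h1, ?_⟩
  set E := 7 * (2 : ℝ) ^ (n + 1) - 9 * (n : ℝ) - 11 - 3 / (2 : ℝ) ^ n with hE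
  set lam := ∑ ν ∈ ((Finset.Icc (fun _ => -((2:ℤ)^n - 1)) (fun _ => (2:ℤ)^n - 1) :
      Finset (Fin 3 → ℤ)).erase 0), (∑ i, ((ν i : ℝ)) ^ 2)⁻¹ with hlamdef
  have hEpos : 0 < E := by
    have hnat : n + 1 ≤ 2^n := Nat.lt_two_pow_self
    have hn1 : (n:ℝ) + 1 ≤ (2:ℝ)^n := by exact_mod_cast hnat
    have h2n : (2:ℝ) ≤ (2:ℝ)^n := by
      calc (2:ℝ) = (2:ℝ)^1 := by norm_num
        _ ≤ (2:ℝ)^n := pow_le_pow_right₀ (by norm_num) hn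
    have hfrac : 3/(2:ℝ)^n ≤ 3/2 := by
      apply div_le_div_of_nonneg_left (by norm_num) (by norm_num) h2n
    have hsucc : (2:ℝ)^(n+1) = 2*(2:ℝ)^n := by rw [pow_succ]; ring
    rw [hE, hsucc]
    nlinarith
  clear hE hlamdef
  clear_value E lam
  have hlampos : 0 < lam := by
    calc (0:ℝ) < (1/3)*E := by linarith
      _ ≤ lam := h1
  rw [div_mul_eq_mul_div, div_le_iff₀ hlampos]
  linarith
end

section
/- Let 𝓗 be a complex Hilbert space and ψ₀ ∈ 𝓗 a unit vector. Let U_init, U_prop, U_B, Ũ_init, Ũ_prop, Ũ_B be unitary operators on 𝓗 with ‖(U_init − Ũ_init) ψ₀‖ ≤ ε_init, ‖U_prop − Ũ_prop‖ ≤ ε_prop and ‖U_B − Ũ_B‖ ≤ ε_B, and set Ψ = U_B U_prop U_init ψ₀ and Ψ̃ = Ũ_B Ũ_prop Ũ_init ψ₀. Let O and Õ be bounded self-adjoint operators on 𝓗 with ‖O‖ ≤ λ_O, ‖Õ‖ ≤ λ_O (λ_O > 0) and ‖O − Õ‖ ≤ ε_O. If θ_est ∈ ℝ satisfies |θ_est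 − arccos( ⟨Ψ̃, Õ Ψ̃⟩ / λ_O )| ≤ ε_QAE / λ_O, then | λ_O · cos θ_est − ⟨Ψ, O Ψ⟩ | ≤ 2 λ_O ( ε_init + ε_prop + ε_B ) + ε_O + ε_QAE. -/
open scoped InnerProductSpace

lemma cos_lip (a b : ℝ) : |Real.cos a - Real.cos b| ≤ |a - b| := by
  rw [Real.cos_sub_cos]
  have h1 : |Real.sin ((a + b) / 2)| ≤ 1 := Real.abs_sin_le_one _
  have h2 : |Real.sin ((a - b) / 2)| ≤ |(a - b) / 2| := Real.abs_sin_le_abs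
  calc |-2 * Real.sin ((a + b) / 2) * Real.sin ((a - b) / 2)|
      = 2 * |Real.sin ((a + b) / 2)| * |Real.sin ((a - b) / 2)| := by
        rw [abs_mul, abs_mul]; norm_num
    _ ≤ 2 * 1 * |(a - b) / 2| := by
        apply mul_le_mul _ h2 (abs_nonneg _) (by norm_num)
        exact mul_le_mul_of_nonneg_left h1 (by norm_num)
    _ = |a - b| := by rw [abs_div, abs_two]; ring

/-- End-to-end error bound for estimating an observable expectation value: combining
initial-state-preparation, propagation, basis-change, block-encoding, and
amplitude-estimation errors gives
`|λ_O cos θ_est - ⟨Ψ, OΨ⟩| ≤ 2λ_O(ε_init + ε_prop + ε_B) + ε_O + ε_QAE`. -/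
theorem stmt14 {H : Type*} [NormedAddCommGroup H] [InnerProductSpace ℂ H] [CompleteSpace H]
    (ψ₀ : H) (hψ₀ : ‖ψ₀‖ = 1)
    (Uinit Uprop UB Utinit Utprop UtB : H →L[ℂ] H)
    (hUinit : Uinit ∈ unitary (H →L[ℂ] H)) (hUprop : Uprop ∈ unitary (H →L[ℂ] H))
    (hUB : UB ∈ unitary (H →L[ℂ] H))
    (hUtinit : Utinit ∈ unitary (H →L[ℂ] H)) (hUtprop : Utprop ∈ unitary (H →L[ℂ] H))
    (hUtB : UtB ∈ unitary (H →L[ℂ] H))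
    (εinit εprop εB : ℝ)
    (hinit : ‖(Uinit - Utinit) ψ₀‖ ≤ εinit)
    (hprop : ‖Uprop - Utprop‖ ≤ εprop)
    (hB : ‖UB - UtB‖ ≤ εB)
    (Ψ Ψt : H)
    (hΨ : Ψ = UB (Uprop (Uinit ψ₀))) (hΨt : Ψt = UtB (Utprop (Utinit ψ₀)))
    (O Ot : H →L[ℂ] H) (hOsa : IsSelfAdjoint O) (hOtsa : IsSelfAdjoint Ot)
    (lamO : ℝ) (hlam : 0 < lamO) (hO : ‖O‖ ≤ lamO) (hOt : ‖Ot‖ ≤ lamO)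
    (εO : ℝ) (hOOt : ‖O - Ot‖ ≤ εO)
    (θest εQAE : ℝ)
    (hest : |θest - Real.arccos ((⟪Ψt, Ot Ψt⟫_ℂ).re / lamO)| ≤ εQAE / lamO) :
    ‖((lamO * Real.cos θest : ℝ) : ℂ) - ⟪Ψ, O Ψ⟫_ℂ‖ ≤
      2 * lamO * (εinit + εprop + εB) + εO + εQAE := by
  -- norms of states
  have hn1 : ‖Uinit ψ₀‖ = 1 := by
    rw [Uinit.norm_map_of_mem_unitary hUinit, hψ₀]
  have hn2 : ‖Uprop (Uinit ψ₀)‖ = 1 := by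
    rw [Uprop.norm_map_of_mem_unitary hUprop, hn1]
  have hnΨ : ‖Ψ‖ = 1 := by
    rw [hΨ, UB.norm_map_of_mem_unitary hUB, hn2]
  have hnt1 : ‖Utinit ψ₀‖ = 1 := by
    rw [Utinit.norm_map_of_mem_unitary hUtinit, hψ₀]
  have hnΨt : ‖Ψt‖ = 1 := by
    rw [hΨt, UtB.norm_map_of_mem_unitary hUtB, Utprop.norm_map_of_mem_unitary hUtprop,
      Utinit.norm_map_of_mem_unitary hUtinit, hψ₀]
  -- state error
  have hstates : ‖Ψ - Ψt‖ ≤ εinit + εprop + εB := by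
    have h2 : ‖Uprop (Uinit ψ₀) - Utprop (Utinit ψ₀)‖ ≤ εinit + εprop := by
      have : Uprop (Uinit ψ₀) - Utprop (Utinit ψ₀)
          = (Uprop - Utprop) (Uinit ψ₀) + Utprop (Uinit ψ₀ - Utinit ψ₀) := by
        simp [ContinuousLinearMap.sub_apply, map_sub]
      rw [this]
      refine (norm_add_le _ _).trans ?_
      have ha : ‖(Uprop - Utprop) (Uinit ψ₀)‖ ≤ εprop := by
        calc ‖(Uprop - Utprop) (Uinit ψ₀)‖ ≤ ‖Uprop - Utprop‖ * ‖Uinit ψ₀‖ :=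
              ContinuousLinearMap.le_opNorm _ _
          _ ≤ εprop := by rw [hn1, mul_one]; exact hprop
      have hb : ‖Utprop (Uinit ψ₀ - Utinit ψ₀)‖ ≤ εinit := by
        rw [Utprop.norm_map_of_mem_unitary hUtprop]
        simpa [ContinuousLinearMap.sub_apply] using hinit
      linarith
    have : Ψ - Ψt = (UB - UtB) (Uprop (Uinit ψ₀))
        + UtB (Uprop (Uinit ψ₀) - Utprop (Utinit ψ₀)) := by
      rw [hΨ, hΨt]
      simp [ContinuousLinearMap.sub_apply, map_sub]
    rw [this]
    refine (norm_add_le _ _).trans ?_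
    have ha : ‖(UB - UtB) (Uprop (Uinit ψ₀))‖ ≤ εB := by
      calc ‖(UB - UtB) (Uprop (Uinit ψ₀))‖ ≤ ‖UB - UtB‖ * ‖Uprop (Uinit ψ₀)‖ :=
            ContinuousLinearMap.le_opNorm _ _
        _ ≤ εB := by rw [hn2, mul_one]; exact hB
    rw [UtB.norm_map_of_mem_unitary hUtB]
    linarith
  have hεnn : 0 ≤ εinit + εprop + εB := le_trans (norm_nonneg _) hstates
  -- expectation value error
  have hexp : ‖⟪Ψt, Ot Ψt⟫_ℂ - ⟪Ψ, O Ψ⟫_ℂ‖ ≤ 2 * lamO * (εinit + εprop + εB) + εO := by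
    have hsplit : ⟪Ψt, Ot Ψt⟫_ℂ - ⟪Ψ, O Ψ⟫_ℂ
        = ⟪Ψt, (Ot - O) Ψt⟫_ℂ + ⟪Ψt - Ψ, O Ψt⟫_ℂ + ⟪Ψ, O (Ψt - Ψ)⟫_ℂ := by
      simp only [ContinuousLinearMap.sub_apply, map_sub, inner_sub_left, inner_sub_right]
      ring
    rw [hsplit]
    have b1 : ‖⟪Ψt, (Ot - O) Ψt⟫_ℂ‖ ≤ εO := by
      calc ‖⟪Ψt, (Ot - O) Ψt⟫_ℂ‖ ≤ ‖Ψt‖ * ‖(Ot - O) Ψt‖ := norm_inner_le_norm _ _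
        _ ≤ ‖Ψt‖ * (‖Ot - O‖ * ‖Ψt‖) := by
            exact mul_le_mul_of_nonneg_left (ContinuousLinearMap.le_opNorm _ _) (norm_nonneg _)
        _ ≤ εO := by
            rw [hnΨt, one_mul, mul_one, norm_sub_rev]
            exact hOOt
    have b2 : ‖⟪Ψt - Ψ, O Ψt⟫_ℂ‖ ≤ lamO * (εinit + εprop + εB) := by
      calc ‖⟪Ψt - Ψ, O Ψt⟫_ℂ‖ ≤ ‖Ψt - Ψ‖ * ‖O Ψt‖ := norm_inner_le_norm _ _
        _ ≤ ‖Ψt - Ψ‖ * (‖O‖ * ‖Ψt‖) :=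
            mul_le_mul_of_nonneg_left (ContinuousLinearMap.le_opNorm _ _) (norm_nonneg _)
        _ ≤ lamO * (εinit + εprop + εB) := by
            rw [hnΨt, mul_one, norm_sub_rev, mul_comm]
            exact mul_le_mul hO hstates (norm_nonneg _) hlam.le
    have b3 : ‖⟪Ψ, O (Ψt - Ψ)⟫_ℂ‖ ≤ lamO * (εinit + εprop + εB) := by
      calc ‖⟪Ψ, O (Ψt - Ψ)⟫_ℂ‖ ≤ ‖Ψ‖ * ‖O (Ψt - Ψ)‖ := norm_inner_le_norm _ _
        _ ≤ ‖Ψ‖ * (‖O‖ * ‖Ψt - Ψ‖) :=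
            mul_le_mul_of_nonneg_left (ContinuousLinearMap.le_opNorm _ _) (norm_nonneg _)
        _ ≤ lamO * (εinit + εprop + εB) := by
            rw [hnΨ, one_mul, norm_sub_rev]
            exact mul_le_mul hO hstates (norm_nonneg _) hlam.le
    calc ‖⟪Ψt, (Ot - O) Ψt⟫_ℂ + ⟪Ψt - Ψ, O Ψt⟫_ℂ + ⟪Ψ, O (Ψt - Ψ)⟫_ℂ‖
        ≤ ‖⟪Ψt, (Ot - O) Ψt⟫_ℂ + ⟪Ψt - Ψ, O Ψt⟫_ℂ‖ + ‖⟪Ψ, O (Ψt - Ψ)⟫_ℂ‖ := norm_add_le _ _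
      _ ≤ ‖⟪Ψt, (Ot - O) Ψt⟫_ℂ‖ + ‖⟪Ψt - Ψ, O Ψt⟫_ℂ‖ + ‖⟪Ψ, O (Ψt - Ψ)⟫_ℂ‖ := by
          gcongr; exact norm_add_le _ _
      _ ≤ 2 * lamO * (εinit + εprop + εB) + εO := by linarith
  -- realness of inner products
  have hreal : ∀ (T : H →L[ℂ] H), IsSelfAdjoint T → ∀ x : H,
      ((⟪x, T x⟫_ℂ).re : ℂ) = ⟪x, T x⟫_ℂ := by
    intro T hT y
    have h1 : ⟪T y, y⟫_ℂ = ⟪y, T y⟫_ℂ := hT.isSymmetric y y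
    have h2 : (starRingEnd ℂ) ⟪T y, y⟫_ℂ = ⟪T y, y⟫_ℂ := hT.isSymmetric.conj_inner_sym y y
    rw [← h1]
    exact Complex.conj_eq_iff_re.mp h2
  -- work over the reals
  have hΨreal : ((⟪Ψ, O Ψ⟫_ℂ).re : ℂ) = ⟪Ψ, O Ψ⟫_ℂ := hreal O hOsa Ψ
  -- QAE error
  have hc : |(⟪Ψt, Ot Ψt⟫_ℂ).re| ≤ lamO := by
    calc |(⟪Ψt, Ot Ψt⟫_ℂ).re| ≤ ‖⟪Ψt, Ot Ψt⟫_ℂ‖ := Complex.abs_re_le_norm _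
      _ ≤ ‖Ψt‖ * ‖Ot Ψt‖ := norm_inner_le_norm _ _
      _ ≤ ‖Ψt‖ * (‖Ot‖ * ‖Ψt‖) :=
          mul_le_mul_of_nonneg_left (ContinuousLinearMap.le_opNorm _ _) (norm_nonneg _)
      _ ≤ lamO := by rw [hnΨt, mul_one, one_mul]; exact hOt
  set x : ℝ := (⟪Ψt, Ot Ψt⟫_ℂ).re / lamO with hx
  have hx1 : -1 ≤ x := by
    rw [hx, le_div_iff₀ hlam, neg_mul, one_mul]
    linarith [abs_le.mp hc]
  have hx2 : x ≤ 1 := by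
    rw [hx, div_le_iff₀ hlam, one_mul]
    linarith [abs_le.mp hc]
  have hcosarccos : Real.cos (Real.arccos x) = x := Real.cos_arccos hx1 hx2
  have hqae : |lamO * Real.cos θest - (⟪Ψt, Ot Ψt⟫_ℂ).re| ≤ εQAE := by
    have : lamO * Real.cos θest - (⟪Ψt, Ot Ψt⟫_ℂ).re
        = lamO * (Real.cos θest - Real.cos (Real.arccos x)) := by
      rw [hcosarccos, hx]; field_simp
    rw [this, abs_mul, abs_of_pos hlam]
    calc lamO * |Real.cos θest - Real.cos (Real.arccos x)|
        ≤ lamO * |θest - Real.arccos x| := by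
          exact mul_le_mul_of_nonneg_left (cos_lip _ _) hlam.le
      _ ≤ lamO * (εQAE / lamO) := mul_le_mul_of_nonneg_left hest hlam.le
      _ = εQAE := by field_simp
  -- combine
  calc ‖((lamO * Real.cos θest : ℝ) : ℂ) - ⟪Ψ, O Ψ⟫_ℂ‖
      ≤ ‖((lamO * Real.cos θest : ℝ) : ℂ) - ((⟪Ψt, Ot Ψt⟫_ℂ).re : ℂ)‖
        + ‖((⟪Ψt, Ot Ψt⟫_ℂ).re : ℂ) - ⟪Ψ, O Ψ⟫_ℂ‖ := norm_sub_le_norm_sub_add_norm_sub _ _ _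
    _ ≤ εQAE + (2 * lamO * (εinit + εprop + εB) + εO) := by
        gcongr
        · rw [← Complex.ofReal_sub, Complex.norm_real]
          exact hqae
        · rw [hreal Ot hOtsa Ψt]
          exact hexp
    _ = 2 * lamO * (εinit + εprop + εB) + εO + εQAE := by ring
end

section
/- Let φ ∈ [−π/2, π/2], and set t = tan(φ/2), s = sin φ and c = cos φ. Let M be the 2×2 real matrix M = [[1, 0], [−s, 1]] · [[1, t], [0, 1]]. Then the largest eigenvalue of MᵀM equals 1 + ( t² + √( (2 + t²)² − 4(c + s t)² ) )/2, and it is at most 1 + (1 + √5)/2; hence ‖M‖₂ < 1.619. -/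
open Matrix

set_option maxHeartbeats 1000000

lemma myTrace {n : Type*} [Fintype n] [DecidableEq n] (A : Matrix n n ℝ) (hA : A.IsHermitian) :
    A.trace = ∑ i, hA.eigenvalues i := by
  nth_rewrite 1 [hA.spectral_theorem]
  rw [Unitary.conjStarAlgAut_apply, Matrix.trace_mul_cycle, Unitary.coe_star_mul_self, Matrix.one_mul,
    Matrix.trace_diagonal]
  simp

/-- Spectral norm of the shear product `M = S₂(φ)·S₁(φ)` for `φ ∈ [-π/2, π/2]`: the largest
eigenvalue of `MᵀM` is `1 + (t² + √((2+t²)² - 4(c+st)²))/2 ≤ 1 + (1+√5)/2`,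
hence `‖M‖₂ < 1.619`. -/
theorem stmt16 (φ : ℝ) (hφ : φ ∈ Set.Icc (-(Real.pi / 2)) (Real.pi / 2))
    (t s c : ℝ) (ht : t = Real.tan (φ / 2)) (hs : s = Real.sin φ) (hc : c = Real.cos φ)
    (M : Matrix (Fin 2) (Fin 2) ℝ) (hM : M = !![1, 0; -s, 1] * !![1, t; 0, 1])
    (h : (Mᵀ * M).IsHermitian) :
    (⨆ i, h.eigenvalues i) =
        1 + (t ^ 2 + Real.sqrt ((2 + t ^ 2) ^ 2 - 4 * (c + s * t) ^ 2)) / 2 ∧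
    (⨆ i, h.eigenvalues i) ≤ 1 + (1 + Real.sqrt 5) / 2 ∧
    Real.sqrt (⨆ i, h.eigenvalues i) < 1.619 := by
  obtain ⟨hφ1, hφ2⟩ := hφ
  have hpi := Real.pi_pos
  -- half angle facts
  have hcos2 : 0 < Real.cos (φ / 2) :=
    Real.cos_pos_of_mem_Ioo ⟨by linarith, by linarith⟩
  have hsin2 : Real.sin φ = 2 * Real.sin (φ / 2) * Real.cos (φ / 2) := by
    rw [← Real.sin_two_mul]; ring_nf
  have hcos2' : Real.cos φ = 1 - 2 * Real.sin (φ / 2) ^ 2 := by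
    have := Real.sin_sq_eq_half_sub (φ / 2)
    have h2 : 2 * (φ / 2) = φ := by ring
    rw [h2] at this
    linarith
  have hst : s * t = 1 - c := by
    rw [hs, ht, hc, Real.tan_eq_sin_div_cos, hsin2, hcos2']
    field_simp
    ring
  have hpyth : s ^ 2 + c ^ 2 = 1 := by rw [hs, hc]; exact Real.sin_sq_add_cos_sq φ
  have hc0 : 0 ≤ c := hc ▸ Real.cos_nonneg_of_mem_Icc ⟨hφ1, hφ2⟩
  -- t² ≤ 1
  have ht1 : t ^ 2 ≤ 1 := by
    have hcsq : Real.cos (φ / 2) ^ 2 - Real.sin (φ / 2) ^ 2 = c := by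
      have hps : Real.sin (φ / 2) ^ 2 + Real.cos (φ / 2) ^ 2 = 1 :=
        Real.sin_sq_add_cos_sq _
      rw [hc, hcos2']; linarith [hps]
    rw [ht, Real.tan_eq_sin_div_cos, div_pow, div_le_one (by positivity)]
    nlinarith
  -- explicit matrix
  have hM' : M = !![1, t; -s, 1 - s * t] := by
    rw [hM]
    ext i j
    fin_cases i <;> fin_cases j <;>
      simp [Matrix.mul_apply, Fin.sum_univ_two] <;> ring
  have hMT : Mᵀ = !![1, -s; t, 1 - s * t] := by
    rw [hM']
    ext i j
    fin_cases i <;> fin_cases j <;> simp [Matrix.transpose_apply]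
  have hA : Mᵀ * M = !![1 + s ^ 2, t - s * (1 - s * t);
      t - s * (1 - s * t), t ^ 2 + (1 - s * t) ^ 2] := by
    rw [hMT, hM', Matrix.mul_fin_two]
    ext i j
    fin_cases i <;> fin_cases j <;> simp <;> ring
  -- trace and det
  have htr : (Mᵀ * M).trace = 2 + t ^ 2 := by
    rw [hA, Matrix.trace_fin_two_of]
    nlinarith [hst, hpyth]
  have hdet : (Mᵀ * M).det = 1 := by
    rw [hA, Matrix.det_fin_two_of]
    ring
  set e0 := h.eigenvalues 0 with he0
  set e1 := h.eigenvalues 1 with he1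
  have hsum : e0 + e1 = 2 + t ^ 2 := by
    have := myTrace _ h
    rw [htr, Fin.sum_univ_two] at this
    linarith
  have hprod : e0 * e1 = 1 := by
    have := h.det_eq_prod_eigenvalues
    rw [hdet, Fin.prod_univ_two] at this
    exact_mod_cast this.symm
  -- sup = max
  have hsup : (⨆ i, h.eigenvalues i) = max e0 e1 := by
    apply le_antisymm
    · apply ciSup_le
      intro i
      fin_cases i
      exacts [le_max_left _ _, le_max_right _ _]
    · have hbdd : BddAbove (Set.range h.eigenvalues) :=
        (Set.finite_range _).bddAbove
      exact max_le (le_ciSup hbdd 0) (le_ciSup hbdd 1)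
  have hT4 : (2 + t ^ 2) ^ 2 - 4 = (e0 - e1) ^ 2 := by nlinarith
  have hsqrt : Real.sqrt ((2 + t ^ 2) ^ 2 - 4) = |e0 - e1| := by
    rw [hT4, Real.sqrt_sq_eq_abs]
  have hmax : max e0 e1 = 1 + (t ^ 2 + Real.sqrt ((2 + t ^ 2) ^ 2 - 4)) / 2 := by
    rcases le_total e0 e1 with hle | hle
    · rw [max_eq_right hle, hsqrt, abs_of_nonpos (by linarith)]; linarith
    · rw [max_eq_left hle, hsqrt, abs_of_nonneg (by linarith)]; linarith
  have hcst : c + s * t = 1 := by linarith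
  have hgoal1 : (⨆ i, h.eigenvalues i) =
      1 + (t ^ 2 + Real.sqrt ((2 + t ^ 2) ^ 2 - 4 * (c + s * t) ^ 2)) / 2 := by
    rw [hsup, hmax, hcst]; norm_num
  have hsq5 : Real.sqrt ((2 + t ^ 2) ^ 2 - 4) ≤ Real.sqrt 5 := by
    apply Real.sqrt_le_sqrt
    nlinarith
  have hgoal2 : (⨆ i, h.eigenvalues i) ≤ 1 + (1 + Real.sqrt 5) / 2 := by
    rw [hsup, hmax]; linarith
  refine ⟨hgoal1, hgoal2, ?_⟩
  have h5 : Real.sqrt 5 < 2.2361 := by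
    rw [show (2.2361 : ℝ) = Real.sqrt (2.2361 ^ 2) by
      rw [Real.sqrt_sq (by norm_num)]]
    apply Real.sqrt_lt_sqrt (by norm_num)
    norm_num
  have hsup_lt : (⨆ i, h.eigenvalues i) < 1.619 ^ 2 := by
    calc (⨆ i, h.eigenvalues i) ≤ 1 + (1 + Real.sqrt 5) / 2 := hgoal2
    _ < 1.619 ^ 2 := by nlinarith
  calc Real.sqrt (⨆ i, h.eigenvalues i) < Real.sqrt (1.619 ^ 2) := by
        apply Real.sqrt_lt_sqrt _ hsup_lt
        rw [hsup, hmax]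
        positivity
  _ = 1.619 := Real.sqrt_sq (by norm_num)
end
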